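/- Niven's theorem: if θ is a rational number and cos(πθ) is rational, then cos(πθ) ∈ {0, 1/2, −1/2, 1, −1}. -/

import Mathlib

open Polynomial

/-- "2cos" Chebyshev-like polynomials: P 0 = 2, P 1 = X, P (n+2) = X * P (n+1) - P n. -/
noncomputable def nivP : ℕ → Polynomial ℤ
  | 0 => Polynomial.C 2
  | 1 => Polynomial.X
  | (n + 2) => Polynomial.X * nivP (n + 1) - nivP n

lemma nivP_deg : ∀ n : ℕ, (nivP n).degree = n
  | 0 => by simpa [nivP] using degree_C (by norm_num : (2:ℤ) ≠ 0)
  | 1 => by simpa [nivP] using degree_X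
  | (n + 2) => by
    have hdn := nivP_deg n
    have hdn1 := nivP_deg (n + 1)
    have hX : (Polynomial.X * nivP (n + 1)).degree = ((n + 2 : ℕ) : WithBot ℕ) := by
      rw [degree_mul, degree_X, hdn1]
      push_cast
      ring
    have hlt : (nivP n).degree < (Polynomial.X * nivP (n + 1)).degree := by
      rw [hdn, hX]
      exact_mod_cast by omega
    show (Polynomial.X * nivP (n + 1) - nivP n).degree = _
    rw [degree_sub_eq_left_of_degree_lt hlt, hX]

lemma nivP_monic : ∀ n : ℕ, (nivP (n + 1)).Monic
  | 0 => by simpa [nivP] using monic_X (R := ℤ)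
  | (n + 1) => by
    have hm := nivP_monic n
    have hX : (Polynomial.X * nivP (n + 1)).degree = ((n + 2 : ℕ) : WithBot ℕ) := by
      rw [degree_mul, degree_X, nivP_deg (n + 1)]
      push_cast
      ring
    have hlt : (nivP n).degree < (Polynomial.X * nivP (n + 1)).degree := by
      rw [nivP_deg n, hX]
      exact_mod_cast by omega
    exact (monic_X.mul hm).sub_of_left hlt

lemma nivP_eval (x : ℝ) : ∀ n : ℕ,
    Polynomial.aeval (2 * Real.cos x) (nivP n) = 2 * Real.cos (n * x)
  | 0 => by simp [nivP, map_ofNat]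
  | 1 => by simp [nivP]
  | (n + 2) => by
    have h1 := nivP_eval x (n + 1)
    have h2 := nivP_eval x n
    have key : Real.cos ((n + 2 : ℕ) * x) + Real.cos ((n : ℕ) * x)
        = 2 * Real.cos (((n : ℕ) + 1) * x) * Real.cos x := by
      have ha := Real.cos_add (((n : ℕ) + 1) * x) x
      have hb := Real.cos_sub (((n : ℕ) + 1) * x) x
      have e1 : ((n : ℕ) + 1) * x + x = ((n + 2 : ℕ) : ℝ) * x := by push_cast; ring
      have e2 : ((n : ℕ) + 1) * x - x = ((n : ℕ) : ℝ) * x := by push_cast; ring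
      rw [e1] at ha; rw [e2] at hb; linarith
    simp only [nivP, map_sub, map_mul, aeval_X, h1, h2]
    push_cast at key ⊢
    linarith

theorem stmt_19 (θ c : ℚ) (h : Real.cos (Real.pi * θ) = (c : ℝ)) :
    c = 0 ∨ c = 1/2 ∨ c = -1/2 ∨ c = 1 ∨ c = -1 := by
  set q : ℕ := θ.den with hq
  have hq1 : 1 ≤ q := θ.pos
  have hqθ : (q : ℝ) * (Real.pi * θ) = (θ.num : ℤ) * Real.pi := by
    have h2 : ((q : ℚ) * θ : ℚ) = ((θ.num : ℤ) : ℚ) := by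
      rw [hq, mul_comm]
      exact_mod_cast Rat.mul_den_eq_num θ
    have h3 : ((q : ℝ) * θ : ℝ) = ((θ.num : ℤ) : ℝ) := by exact_mod_cast h2
    rw [← h3]; ring
  have hcosq : Real.cos ((q : ℝ) * (Real.pi * θ)) = 1 ∨
      Real.cos ((q : ℝ) * (Real.pi * θ)) = -1 := by
    rw [hqθ]
    have habs := Real.abs_cos_int_mul_pi θ.num
    rcases (abs_eq (by norm_num : (0:ℝ) ≤ 1)).mp habs with h' | h'
    · exact Or.inl h'
    · exact Or.inr h' 
  -- evaluate the polynomial at 2c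
  have heval := nivP_eval (Real.pi * θ) q
  have hx : (2 * Real.cos (Real.pi * θ)) = ((2 * c : ℚ) : ℝ) := by
    rw [h]; push_cast; ring
  rw [hx] at heval
  have halg : ((Polynomial.aeval (2 * c : ℚ) (nivP q) : ℚ) : ℝ)
      = 2 * Real.cos ((q : ℝ) * (Real.pi * θ)) := by
    rw [← heval]
    have := Polynomial.aeval_algebraMap_apply ℝ (2 * c : ℚ) (nivP q)
    simpa [Algebra.algebraMap_self] using this.symm
  obtain ⟨e, he, heq⟩ : ∃ e : ℤ, (e = 2 ∨ e = -2) ∧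
      Polynomial.aeval (2 * c : ℚ) (nivP q) = (e : ℚ) := by
    rcases hcosq with h' | h'
    · exact ⟨2, Or.inl rfl, Rat.cast_injective (α := ℝ) (by rw [halg, h']; norm_num)⟩
    · exact ⟨-2, Or.inr rfl, Rat.cast_injective (α := ℝ) (by rw [halg, h']; norm_num)⟩
  -- 2c is integral over ℤ
  have hmonic : (nivP q - Polynomial.C e).Monic := by
    obtain ⟨m, hm⟩ : ∃ m, q = m + 1 := ⟨q - 1, by omega⟩
    rw [hm]
    refine (nivP_monic m).sub_of_left ?_
    refine lt_of_le_of_lt (Polynomial.degree_C_le) ?_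
    rw [nivP_deg]
    exact_mod_cast Nat.succ_pos m
  have hint : IsIntegral ℤ (2 * c : ℚ) := by
    refine ⟨nivP q - Polynomial.C e, hmonic, ?_⟩
    rw [← Polynomial.aeval_def]
    simp [heq]
  obtain ⟨y, hy⟩ := IsIntegrallyClosed.isIntegral_iff.mp hint
  have hy' : (y : ℚ) = 2 * c := by exact_mod_cast hy
  -- bound on c
  have hcb : |(c : ℝ)| ≤ 1 := by rw [← h]; exact Real.abs_cos_le_one _
  have hcb' : |c| ≤ 1 := by rwa [← Rat.cast_abs, ← Rat.cast_one, Rat.cast_le] at hcb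
  have h1 : -1 ≤ c := by rw [abs_le] at hcb'; exact hcb'.1
  have h2 : c ≤ 1 := by rw [abs_le] at hcb'; exact hcb'.2
  have hyb1 : (-2 : ℤ) ≤ y := by
    have h5 : ((-2 : ℤ) : ℚ) ≤ (y : ℚ) := by push_cast; linarith
    exact_mod_cast h5
  have hyb2 : y ≤ 2 := by
    have h5 : (y : ℚ) ≤ ((2 : ℤ) : ℚ) := by push_cast; linarith
    exact_mod_cast h5
  have hc : c = (y : ℚ) / 2 := by linarith [hy']
  interval_cases y <;> norm_num at hc <;> rw [hc] <;> norm_num
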